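/- The double series ∑_{n=1}^∞ ∑_{k=1}^∞ k / (n (1+k)² (n+k)) equals ζ(3). -/

import Mathlib

open scoped BigOperators

noncomputable def H (n : ℕ) : ℝ := ∑ j ∈ Finset.range n, (1:ℝ)/(j+1)

noncomputable def zeta3 : ℝ := ∑' n : ℕ, (1:ℝ)/((n:ℝ)+1)^3

lemma H_succ (n : ℕ) : H (n+1) = H n + 1/((n:ℝ)+1) := by
  simp [H, Finset.sum_range_succ]

lemma H_one : H 1 = 1 := by simp [H]

lemma H_add (n c : ℕ) : H (n + c) = H n + ∑ i ∈ Finset.range c, 1/((n:ℝ)+(i:ℝ)+1) := by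
  rw [H, Finset.sum_range_add]
  congr 1
  apply Finset.sum_congr rfl
  intro i _
  push_cast
  ring_nf

lemma summable_threeHalves :
    Summable (fun n : ℕ => 1 / (((n:ℝ)+1) * Real.sqrt ((n:ℝ)+1))) := by
  have h0 : Summable (fun n : ℕ => ((n:ℝ)) ^ (-(3/2) : ℝ)) :=
    Real.summable_nat_rpow.2 (by norm_num)
  have h1 : Summable (fun n : ℕ => ((n+1 : ℕ):ℝ) ^ (-(3/2) : ℝ)) :=
    (summable_nat_add_iff 1).2 h0
  apply h1.congr
  intro n
  have hx : (0:ℝ) < (n:ℝ)+1 := by positivity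
  have : ((n+1 : ℕ):ℝ) = (n:ℝ)+1 := by push_cast; ring
  rw [this, Real.rpow_neg hx.le, show (3/2 : ℝ) = 1 + 1/2 by norm_num,
    Real.rpow_add hx, Real.rpow_one, ← Real.sqrt_eq_rpow, one_div]

lemma summable_core :
    Summable (fun p : ℕ×ℕ =>
      1/(((p.1:ℝ)+1)*((p.2:ℝ)+1)*((p.1:ℝ)+(p.2:ℝ)+2))) := by
  have hm := summable_threeHalves.mul_of_nonneg summable_threeHalves
    (fun n => by positivity) (fun n => by positivity)
  apply Summable.of_nonneg_of_le (fun p => by positivity) _ hm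
  intro p
  set a : ℝ := (p.1 : ℝ) with ha
  set b : ℝ := (p.2 : ℝ) with hb
  have ha0 : 0 ≤ a := Nat.cast_nonneg _
  have hb0 : 0 ≤ b := Nat.cast_nonneg _
  have hs : Real.sqrt (a+1) * Real.sqrt (b+1) ≤ a+b+2 := by
    rw [← Real.sqrt_mul (by linarith)]
    rw [show a+b+2 = Real.sqrt ((a+b+2)^2) from (Real.sqrt_sq (by linarith)).symm]
    exact Real.sqrt_le_sqrt (by nlinarith)
  have h1 : (1:ℝ) / (((a+1) * Real.sqrt (a+1)) * ((b+1) * Real.sqrt (b+1)))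
      = 1 / ((a+1) * Real.sqrt (a+1)) * (1 / ((b+1) * Real.sqrt (b+1))) := by
    rw [div_mul_div_comm, one_mul]
  rw [← h1]
  apply one_div_le_one_div_of_le (by positivity)
  calc (a+1)*(b+1)*(a+b+2) ≥ (a+1)*(b+1)*(Real.sqrt (a+1) * Real.sqrt (b+1)) := by
        apply mul_le_mul_of_nonneg_left hs (by positivity)
    _ = (a+1) * Real.sqrt (a+1) * ((b+1) * Real.sqrt (b+1)) := by ring

lemma tele (c : ℕ) :
    HasSum (fun n : ℕ => (1:ℝ)/((n:ℝ)+1) - 1/((n:ℝ)+(c:ℝ)+1)) (H c) := by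
  set f : ℕ → ℝ := fun n => (1:ℝ)/((n:ℝ)+1) - 1/((n:ℝ)+(c:ℝ)+1) with hf
  have hc0 : (0:ℝ) ≤ (c:ℝ) := Nat.cast_nonneg _
  have hnn : ∀ n, 0 ≤ f n := by
    intro n
    have : (1:ℝ)/((n:ℝ)+(c:ℝ)+1) ≤ 1/((n:ℝ)+1) :=
      one_div_le_one_div_of_le (by positivity) (by linarith)
    simpa [hf] using sub_nonneg.2 this
  have htail : ∀ N : ℕ, H (N + c) - H N = ∑ i ∈ Finset.range c, 1/((N:ℝ)+(i:ℝ)+1) := by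
    intro N; rw [H_add]; ring
  have hpart : ∀ N : ℕ, ∑ n ∈ Finset.range N, f n = H c - (H (N + c) - H N) := by
    intro N
    have h1 : ∑ n ∈ Finset.range N, (1:ℝ)/((n:ℝ)+1) = H N := rfl
    have h2 : ∑ n ∈ Finset.range N, (1:ℝ)/((n:ℝ)+(c:ℝ)+1) = H (c + N) - H c := by
      rw [H_add c N]
      have : ∑ i ∈ Finset.range N, 1/((c:ℝ)+(i:ℝ)+1)
          = ∑ n ∈ Finset.range N, (1:ℝ)/((n:ℝ)+(c:ℝ)+1) :=
        Finset.sum_congr rfl (fun i _ => by ring_nf)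
      rw [this]; ring
    rw [hf]
    simp only [Finset.sum_sub_distrib, h1, h2]
    rw [Nat.add_comm c N]
    ring
  have htail_le : ∀ N : ℕ, H (N + c) - H N ≤ (c:ℝ) / ((N:ℝ)+1) := by
    intro N
    rw [htail N]
    calc ∑ i ∈ Finset.range c, 1/((N:ℝ)+(i:ℝ)+1)
        ≤ ∑ _i ∈ Finset.range c, 1/((N:ℝ)+1) := by
          apply Finset.sum_le_sum
          intro i _
          exact one_div_le_one_div_of_le (by positivity)
            (by have : (0:ℝ) ≤ (i:ℝ) := Nat.cast_nonneg _; linarith)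
      _ = (c:ℝ) / ((N:ℝ)+1) := by
          rw [Finset.sum_const, Finset.card_range, nsmul_eq_mul]; ring
  have htail_nn : ∀ N : ℕ, 0 ≤ H (N + c) - H N := by
    intro N
    rw [htail N]
    exact Finset.sum_nonneg (fun i _ => by positivity)
  have hsum : Summable f := by
    apply summable_of_sum_range_le (c := H c) hnn
    intro N
    rw [hpart N]
    linarith [htail_nn N]
  have hlim : Filter.Tendsto (fun N : ℕ => ∑ n ∈ Finset.range N, f n)
      Filter.atTop (nhds (H c)) := by
    simp only [hpart]
    have h0 : Filter.Tendsto (fun N : ℕ => H (N + c) - H N) Filter.atTop (nhds 0) := by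
      apply squeeze_zero htail_nn htail_le
      have := (tendsto_one_div_add_atTop_nhds_zero_nat).const_mul (c:ℝ)
      simpa [mul_one_div, div_eq_mul_inv] using this
    have := (tendsto_const_nhds (x := H c) (f := Filter.atTop (α := ℕ))).sub h0
    simpa using this
  have h1 := hsum.hasSum.tendsto_sum_nat
  have heq : ∑' n, f n = H c := tendsto_nhds_unique h1 hlim
  exact heq ▸ hsum.hasSum

lemma inner_a (k : ℕ) :
    HasSum (fun n : ℕ => ((k:ℝ)+1)/(((n:ℝ)+1)*((k:ℝ)+2)^2*((n:ℝ)+(k:ℝ)+2)))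
      (H (k+1) / ((k:ℝ)+2)^2) := by
  have h := (tele (k+1)).div_const (((k:ℝ)+2)^2)
  have hfun : (fun n : ℕ => ((k:ℝ)+1)/(((n:ℝ)+1)*((k:ℝ)+2)^2*((n:ℝ)+(k:ℝ)+2)))
      = fun n : ℕ => ((1:ℝ)/((n:ℝ)+1) - 1/((n:ℝ)+((k+1:ℕ):ℝ)+1)) / ((k:ℝ)+2)^2 := by
    funext n
    have h1 : ((n:ℝ)+1) ≠ 0 := by positivity
    have h4 : ((n:ℝ)+((k:ℝ)+1)+1) ≠ 0 := by positivity
    push_cast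
    rw [div_sub_div _ _ h1 h4, div_div,
      show (1*((n:ℝ)+((k:ℝ)+1)+1) - ((n:ℝ)+1)*1) = (k:ℝ)+1 by ring]
    congr 1
    ring
  rw [hfun]
  exact h

lemma inner_w (j : ℕ) :
    HasSum (fun m : ℕ => 1/(((j:ℝ)+1)*((m:ℝ)+1)*((j:ℝ)+(m:ℝ)+2)))
      (H (j+1) / ((j:ℝ)+1)^2) := by
  have h := (tele (j+1)).div_const (((j:ℝ)+1)^2)
  have hfun : (fun m : ℕ => 1/(((j:ℝ)+1)*((m:ℝ)+1)*((j:ℝ)+(m:ℝ)+2)))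
      = fun m : ℕ => ((1:ℝ)/((m:ℝ)+1) - 1/((m:ℝ)+((j+1:ℕ):ℝ)+1)) / ((j:ℝ)+1)^2 := by
    funext m
    have h1 : ((m:ℝ)+1) ≠ 0 := by positivity
    have h4 : ((m:ℝ)+((j:ℝ)+1)+1) ≠ 0 := by positivity
    push_cast
    rw [div_sub_div _ _ h1 h4, div_div,
      show (1*((m:ℝ)+((j:ℝ)+1)+1) - ((m:ℝ)+1)*1) = (j:ℝ)+1 by ring]
    rw [div_eq_div_iff (by positivity) (by positivity)]
    ring
  rw [hfun]
  exact h

lemma summable_a :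
    Summable (fun p : ℕ×ℕ =>
      ((p.2:ℝ)+1)/(((p.1:ℝ)+1)*((p.2:ℝ)+2)^2*((p.1:ℝ)+(p.2:ℝ)+2))) := by
  apply summable_core.of_nonneg_of_le (fun p => by positivity)
  intro p
  set a : ℝ := (p.1:ℝ); set b : ℝ := (p.2:ℝ)
  have ha : (0:ℝ) ≤ a := Nat.cast_nonneg _
  have hb : (0:ℝ) ≤ b := Nat.cast_nonneg _
  rw [div_le_div_iff₀ (by positivity) (by positivity)]
  have h1 : (0:ℝ) ≤ (a+1)*(a+b+2)*(2*b+3) := by positivity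
  nlinarith [h1]

lemma summable_u :
    Summable (fun p : ℕ×ℕ => 1/(((p.1:ℝ)+1)*((p.1:ℝ)+(p.2:ℝ)+2)^2)) := by
  apply summable_core.of_nonneg_of_le (fun p => by positivity)
  intro p
  set a : ℝ := (p.1:ℝ); set b : ℝ := (p.2:ℝ)
  have ha : (0:ℝ) ≤ a := Nat.cast_nonneg _
  have hb : (0:ℝ) ≤ b := Nat.cast_nonneg _
  apply one_div_le_one_div_of_le (by positivity)
  have h2 : (0:ℝ) ≤ (a+1)*(a+b+2)*(a+1) := by positivity
  nlinarith [h2]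

noncomputable def vv : ℕ×ℕ → ℝ :=
  fun q => if q.2 < q.1 + 1 then 1/(((q.2:ℝ)+1)*((q.1:ℝ)+2)^2) else 0

def ee : ℕ×ℕ → ℕ×ℕ := fun p => (p.1+p.2, p.1)

lemma ee_inj : Function.Injective ee := by
  intro p q h
  simp only [ee, Prod.mk.injEq] at h
  exact Prod.ext (by omega) (by omega)

lemma vv_ee (p : ℕ×ℕ) :
    vv (ee p) = 1/(((p.1:ℝ)+1)*((p.1:ℝ)+(p.2:ℝ)+2)^2) := by
  simp only [vv, ee]
  simp only [show p.1 < p.1 + p.2 + 1 by omega, ↓reduceIte]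
  push_cast
  ring_nf

lemma vv_supp : ∀ q ∉ Set.range ee, vv q = 0 := by
  intro q hq
  by_cases h : q.2 < q.1 + 1
  · exfalso
    apply hq
    refine ⟨(q.2, q.1 - q.2), ?_⟩
    simp only [ee]
    exact Prod.ext (by omega) (by omega)
  · simp [vv, h]

lemma summable_vv : Summable vv := by
  refine (ee_inj.summable_iff vv_supp).1 ?_
  exact summable_u.congr (fun p => (vv_ee p).symm)

lemma inner_vv (k : ℕ) : ∑' j : ℕ, vv (k, j) = H (k+1) / ((k:ℝ)+2)^2 := by
  rw [tsum_eq_sum (s := Finset.range (k+1))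
    (fun j hj => by simp only [vv]; rw [if_neg (by simpa using hj)])]
  have : ∀ j ∈ Finset.range (k+1),
      vv (k, j) = (1/((j:ℝ)+1)) / ((k:ℝ)+2)^2 := by
    intro j hj
    simp only [vv]
    rw [if_pos (by simpa using hj), div_div]
  rw [Finset.sum_congr rfl this, ← Finset.sum_div, H]

lemma U_eq_tsum_u :
    ∑' k : ℕ, H (k+1) / ((k:ℝ)+2)^2
      = ∑' p : ℕ×ℕ, 1/(((p.1:ℝ)+1)*((p.1:ℝ)+(p.2:ℝ)+2)^2) := by
  have h1 : ∑' p : ℕ×ℕ, vv (ee p) = ∑' q : ℕ×ℕ, vv q :=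
    ee_inj.tsum_eq (fun q hq => by
      by_contra hmem
      exact hq (vv_supp q hmem))
  have h2 : ∑' p : ℕ×ℕ, vv (ee p)
      = ∑' p : ℕ×ℕ, 1/(((p.1:ℝ)+1)*((p.1:ℝ)+(p.2:ℝ)+2)^2) :=
    tsum_congr (fun p => vv_ee p)
  have h3 : ∑' q : ℕ×ℕ, vv q = ∑' k : ℕ, ∑' j : ℕ, vv (k, j) := summable_vv.tsum_prod
  calc ∑' k : ℕ, H (k+1)/((k:ℝ)+2)^2
      = ∑' k : ℕ, ∑' j : ℕ, vv (k,j) := tsum_congr (fun k => (inner_vv k).symm)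
    _ = ∑' q : ℕ×ℕ, vv q := h3.symm
    _ = ∑' p : ℕ×ℕ, vv (ee p) := h1.symm
    _ = _ := h2

lemma summable_cube : Summable (fun n : ℕ => (1:ℝ)/((n:ℝ)+1)^3) := by
  have h := Real.summable_one_div_nat_pow.2 (by norm_num : 1 < 3)
  have h2 := (summable_nat_add_iff 1).2 h
  apply h2.congr
  intro n
  push_cast
  ring_nf

lemma summable_cube2 : Summable (fun n : ℕ => (1:ℝ)/((n:ℝ)+2)^3) := by
  have h2 := (summable_nat_add_iff 1).2 summable_cube
  apply h2.congr
  intro n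
  push_cast
  ring_nf

lemma zeta3_eq : zeta3 = 1 + ∑' n : ℕ, (1:ℝ)/((n:ℝ)+2)^3 := by
  rw [zeta3, summable_cube.tsum_eq_zero_add]
  norm_num
  exact tsum_congr (fun n => by push_cast; ring_nf)

lemma summable_U : Summable (fun k : ℕ => H (k+1)/((k:ℝ)+2)^2) :=
  (summable_vv.prod).congr (fun k => inner_vv k)

lemma summable_S1 : Summable (fun j : ℕ => H (j+1)/((j:ℝ)+1)^2) :=
  (summable_core.prod).congr (fun j => (inner_w j).tsum_eq)

lemma W_eq_S1 : (∑' p : ℕ×ℕ, 1/(((p.1:ℝ)+1)*((p.2:ℝ)+1)*((p.1:ℝ)+(p.2:ℝ)+2)))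
    = ∑' j : ℕ, H (j+1)/((j:ℝ)+1)^2 := by
  rw [summable_core.tsum_prod]
  exact tsum_congr (fun j => (inner_w j).tsum_eq)

lemma W_eq_two_U : (∑' p : ℕ×ℕ, 1/(((p.1:ℝ)+1)*((p.2:ℝ)+1)*((p.1:ℝ)+(p.2:ℝ)+2)))
    = 2 * ∑' p : ℕ×ℕ, 1/(((p.1:ℝ)+1)*((p.1:ℝ)+(p.2:ℝ)+2)^2) := by
  have hsw : Summable (fun p : ℕ×ℕ => 1/(((p.2:ℝ)+1)*((p.2:ℝ)+(p.1:ℝ)+2)^2)) := by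
    have h := (Equiv.prodComm ℕ ℕ).summable_iff
      (f := fun q : ℕ×ℕ => 1/(((q.1:ℝ)+1)*((q.1:ℝ)+(q.2:ℝ)+2)^2))
    exact (h.2 summable_u).congr (fun p => rfl)
  have hpt : ∀ p : ℕ×ℕ, 1/(((p.1:ℝ)+1)*((p.2:ℝ)+1)*((p.1:ℝ)+(p.2:ℝ)+2))
      = 1/(((p.1:ℝ)+1)*((p.1:ℝ)+(p.2:ℝ)+2)^2) + 1/(((p.2:ℝ)+1)*((p.2:ℝ)+(p.1:ℝ)+2)^2) := by
    intro p
    set a : ℝ := (p.1:ℝ); set b : ℝ := (p.2:ℝ)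
    have ha : (0:ℝ) ≤ a := Nat.cast_nonneg _
    have hb : (0:ℝ) ≤ b := Nat.cast_nonneg _
    rw [div_add_div _ _ (by positivity) (by positivity),
      div_eq_div_iff (by positivity) (by positivity)]
    ring
  rw [tsum_congr hpt, summable_u.tsum_add hsw]
  have hswap : ∑' p : ℕ×ℕ, 1/(((p.2:ℝ)+1)*((p.2:ℝ)+(p.1:ℝ)+2)^2)
      = ∑' p : ℕ×ℕ, 1/(((p.1:ℝ)+1)*((p.1:ℝ)+(p.2:ℝ)+2)^2) := by
    exact (Equiv.prodComm ℕ ℕ).tsum_eq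
      (fun q : ℕ×ℕ => 1/(((q.1:ℝ)+1)*((q.1:ℝ)+(q.2:ℝ)+2)^2))
  rw [hswap]
  ring

lemma S1_eq : ∑' j : ℕ, H (j+1)/((j:ℝ)+1)^2
    = (∑' k : ℕ, H (k+1)/((k:ℝ)+2)^2) + zeta3 := by
  rw [summable_S1.tsum_eq_zero_add]
  have hterm : ∀ j : ℕ, H ((j+1)+1)/((((j+1):ℕ):ℝ)+1)^2
      = H (j+1)/((j:ℝ)+2)^2 + (1:ℝ)/((j:ℝ)+2)^3 := by
    intro j
    have h2 : ((j:ℝ)+2) ≠ 0 := by positivity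
    rw [H_succ (j+1)]
    push_cast
    field_simp
    ring
  rw [tsum_congr hterm, summable_U.tsum_add summable_cube2]
  have h0 : H (0+1)/(((0:ℕ):ℝ)+1)^2 = 1 := by norm_num [H_one]
  rw [h0, zeta3_eq]
  ring

lemma U_val : ∑' k : ℕ, H (k+1)/((k:ℝ)+2)^2 = zeta3 := by
  have h2 := W_eq_two_U
  rw [W_eq_S1] at h2
  rw [S1_eq, ← U_eq_tsum_u] at h2
  linarith

theorem stmt11 : ∑' n : ℕ, ∑' k : ℕ,
    ((k:ℝ)+1) / (((n:ℝ)+1) * ((k:ℝ)+2)^2 * ((n:ℝ)+(k:ℝ)+2)) = zeta3 := by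
  have hs : Summable (Function.uncurry fun (n k : ℕ) =>
      ((k:ℝ)+1) / (((n:ℝ)+1) * ((k:ℝ)+2)^2 * ((n:ℝ)+(k:ℝ)+2))) := summable_a
  rw [← hs.tsum_comm]
  rw [tsum_congr (fun k => (inner_a k).tsum_eq)]
  exact U_val
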